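/- arXiv:1308.2261 — 5 statements merged into one kernel-verified Lean document; each statement's English description precedes it below -/
import Mathlib

section
/- Let p be a prime and let f be a formal power series in one variable over ℤ_p whose constant coefficient is 1 and such that every coefficient of f − 1 is divisible by p. Then for every natural number n there exist elements d_0, d_1, …, d_n of ℤ_p with p^j dividing d_j for each 0 ≤ j ≤ n, such that for every natural number k the n-th coefficient of f^k equals ∑_{j=0}^{n} C(k,j)·d_j, where C(k,j) denotes the binomial coefficient (interpreted as 0 when j > k). -/
/-- if `f ∈ ℤ_p[[X]]` has constant coefficient `1` and `f ≡ 1 mod p`,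
then for every `n` there are `d_0, …, d_n ∈ ℤ_p` with `p^j ∣ d_j` such that for all `k`,
the `n`-th coefficient of `f^k` equals `∑_{j=0}^n C(k,j) · d_j`. -/
theorem stmt0 (p : ℕ) [Fact p.Prime] (f : PowerSeries ℤ_[p])
    (hconst : PowerSeries.constantCoeff f = 1)
    (hcong : ∀ n : ℕ, (p : ℤ_[p]) ∣ PowerSeries.coeff n (f - 1)) :
    ∀ n : ℕ, ∃ d : ℕ → ℤ_[p],
      (∀ j : ℕ, j ≤ n → (p : ℤ_[p]) ^ j ∣ d j) ∧
      (∀ k : ℕ, PowerSeries.coeff n (f ^ k) =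
        ∑ j ∈ Finset.range (n + 1), (Nat.choose k j : ℤ_[p]) * d j) := by
  intro n
  set g := f - 1 with hg
  have hg0 : PowerSeries.constantCoeff g = 0 := by
    simp [hg, map_sub, hconst]
  obtain ⟨h, hh⟩ : ∃ h, g = (p : ℤ_[p]) • h := by
    refine ⟨PowerSeries.mk (fun m => (hcong m).choose), ?_⟩
    ext m
    simpa [PowerSeries.coeff_mk] using (hcong m).choose_spec
  refine ⟨fun j => PowerSeries.coeff n (g ^ j), ?_, ?_⟩
  · intro j hj
    have hgp : g ^ j = ((p : ℤ_[p]) ^ j) • h ^ j := by rw [hh, smul_pow]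
    show (p : ℤ_[p]) ^ j ∣ PowerSeries.coeff n (g ^ j)
    rw [hgp, map_smul, smul_eq_mul]
    exact Dvd.intro _ rfl
  · intro k
    have hdz : ∀ j, n < j → PowerSeries.coeff n (g ^ j) = 0 := by
      intro j hj
      have hX : (PowerSeries.X : PowerSeries ℤ_[p]) ∣ g := PowerSeries.X_dvd_iff.2 hg0
      have hXj : (PowerSeries.X : PowerSeries ℤ_[p]) ^ j ∣ g ^ j :=
        pow_dvd_pow_of_dvd hX j
      exact (PowerSeries.X_pow_dvd_iff.1 hXj) n hj
    have hf : f = g + 1 := by rw [hg]; ring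
    have hfk : PowerSeries.coeff n (f ^ k)
        = ∑ j ∈ Finset.range (k + 1),
            (k.choose j : ℤ_[p]) * PowerSeries.coeff n (g ^ j) := by
      rw [hf, add_pow, map_sum]
      refine Finset.sum_congr rfl fun j hj => ?_
      rw [show ((k.choose j : ℕ) : PowerSeries ℤ_[p]) = PowerSeries.C ((k.choose j : ℕ) : ℤ_[p]) from (map_natCast _ _).symm, one_pow, mul_one, mul_comm, PowerSeries.coeff_C_mul]
    rw [hfk]
    rcases le_or_gt k n with hkn | hnk
    · refine Finset.sum_subset (Finset.range_subset_range.2 (by omega)) ?_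
      intro j _ hjk
      simp only [Finset.mem_range, not_lt] at hjk
      rw [Nat.choose_eq_zero_of_lt (by omega)]
      simp
    · refine (Finset.sum_subset (Finset.range_subset_range.2 (by omega)) ?_).symm
      intro j _ hjn
      simp only [Finset.mem_range, not_lt] at hjn
      rw [hdz j (by omega)]
      ring
end

section
/- Let p be a prime and let f be a formal power series in one variable over ℤ_p whose constant coefficient is 1 and such that every coefficient of f − 1 is divisible by p. Then there exists a function F from ℤ_p to the ring of formal power series over ℤ_p such that: (i) F(k) = f^k for every natural number k; (ii) F(s + t) = F(s)·F(t) for all s, t in ℤ_p; and (iii) for every natural number n, the map sending s ∈ ℤ_p to the n-th coefficient of F(s) is a continuous function from ℤ_p to ℤ_p. -/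
open PowerSeries Finset

private lemma padic_dvd_of_norm_le {p : ℕ} [Fact p.Prime] {a b : ℤ_[p]} (hb : b ≠ 0)
    (h : ‖a‖ ≤ ‖b‖) : b ∣ a := by
  have hspec := PadicInt.unitCoeff_spec hb
  have hnb : ‖b‖ = (p : ℝ) ^ (-(b.valuation : ℤ)) := by
    conv_lhs => rw [hspec]
    rw [norm_mul, PadicInt.norm_units, one_mul, PadicInt.norm_p_pow]
  rw [hnb, PadicInt.norm_le_pow_iff_mem_span_pow, Ideal.mem_span_singleton] at h
  rw [hspec]
  exact (Units.mul_left_dvd).2 h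

private lemma padic_continuous_of_mul_continuous {p : ℕ} [Fact p.Prime] {c : ℤ_[p]} (hc : c ≠ 0)
    {g : ℤ_[p] → ℤ_[p]} (h : Continuous fun x => c * g x) : Continuous g := by
  have hc' : (0 : ℝ) < ‖c‖ := norm_pos_iff.2 hc
  rw [Metric.continuous_iff] at h ⊢
  intro b ε hε
  obtain ⟨δ, hδ, H⟩ := h b (ε * ‖c‖) (by positivity)
  refine ⟨δ, hδ, fun a ha => ?_⟩
  have h2 := H a ha
  rw [dist_eq_norm] at h2 ⊢
  rw [← mul_sub, norm_mul, mul_comm ε ‖c‖] at h2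
  exact (mul_lt_mul_iff_right₀ hc').1 h2

/-- for `f ∈ ℤ_p[[X]]` with constant coefficient `1` and `f ≡ 1 mod p`,
there is a family `F : ℤ_p → ℤ_p[[X]]` with `F k = f^k` for `k ∈ ℕ`,
`F (s+t) = F s · F t`, and each coefficient of `F s` continuous in `s`. -/
theorem stmt1 (p : ℕ) [Fact p.Prime] (f : PowerSeries ℤ_[p])
    (hconst : PowerSeries.constantCoeff (R := ℤ_[p]) f = 1)
    (hcong : ∀ n : ℕ, (p : ℤ_[p]) ∣ PowerSeries.coeff (R := ℤ_[p]) n (f - 1)) :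
    ∃ F : ℤ_[p] → PowerSeries ℤ_[p],
      (∀ k : ℕ, F (k : ℤ_[p]) = f ^ k) ∧
      (∀ s t : ℤ_[p], F (s + t) = F s * F t) ∧
      (∀ n : ℕ, Continuous fun s : ℤ_[p] => PowerSeries.coeff (R := ℤ_[p]) n (F s)) := by
  classical
  set g : PowerSeries ℤ_[p] := f - 1 with hgdef
  have hf : f = g + 1 := by rw [hgdef]; ring
  have hg0 : constantCoeff (R := ℤ_[p]) g = 0 := by
    rw [hgdef, map_sub, hconst, map_one, sub_self]
  -- coefficients of g^j below j vanish
  have hcoe : ∀ n j : ℕ, n < j → (coeff (R := ℤ_[p]) n) (g ^ j) = 0 := by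
    intro n j hnj
    have hXdvd : (X : PowerSeries ℤ_[p]) ∣ g := PowerSeries.X_dvd_iff.2 hg0
    exact (PowerSeries.X_pow_dvd_iff.1 (pow_dvd_pow_of_dvd hXdvd j)) n hnj
  have hfac : ∀ j : ℕ, (j.factorial : ℤ_[p]) ≠ 0 :=
    fun j => Nat.cast_ne_zero.2 (Nat.factorial_ne_zero j)
  -- binomial coefficients of p-adic integers
  have hdvd : ∀ (j : ℕ) (s : ℤ_[p]), (j.factorial : ℤ_[p]) ∣ (descPochhammer ℤ_[p] j).eval s := by
    intro j s
    refine padic_dvd_of_norm_le (hfac j) ?_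
    set S : Set ℤ_[p] :=
      {x : ℤ_[p] | ‖(descPochhammer ℤ_[p] j).eval x‖ ≤ ‖(j.factorial : ℤ_[p])‖} with hS
    have hclosed : IsClosed S :=
      isClosed_le (Continuous.norm (Polynomial.continuous _)) continuous_const
    have hsub : Set.range (Nat.cast : ℕ → ℤ_[p]) ⊆ S := by
      rintro _ ⟨k, rfl⟩
      show ‖(descPochhammer ℤ_[p] j).eval ((k : ℕ) : ℤ_[p])‖ ≤ ‖(j.factorial : ℤ_[p])‖
      rw [descPochhammer_eval_eq_descFactorial, Nat.descFactorial_eq_factorial_mul_choose,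
        Nat.cast_mul, norm_mul]
      calc ‖(j.factorial : ℤ_[p])‖ * ‖(k.choose j : ℤ_[p])‖
          ≤ ‖(j.factorial : ℤ_[p])‖ * 1 :=
            mul_le_mul_of_nonneg_left (PadicInt.norm_le_one _) (norm_nonneg _)
        _ = ‖(j.factorial : ℤ_[p])‖ := mul_one _
    have huniv : (Set.univ : Set ℤ_[p]) ⊆ S := by
      rw [← (PadicInt.denseRange_natCast (p := p)).closure_eq]
      exact hclosed.closure_subset_iff.2 hsub
    exact huniv (Set.mem_univ s)
  choose binom hbinom using hdvd
  -- binom at natural numbers is the usual binomial coefficient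
  have hbnat : ∀ (j k : ℕ), binom j ((k : ℕ) : ℤ_[p]) = (k.choose j : ℤ_[p]) := by
    intro j k
    have h1 := (hbinom j ((k : ℕ) : ℤ_[p])).symm
    rw [descPochhammer_eval_eq_descFactorial, Nat.descFactorial_eq_factorial_mul_choose,
      Nat.cast_mul] at h1
    exact mul_left_cancel₀ (hfac j) h1
  -- binom is continuous
  have hbcont : ∀ j : ℕ, Continuous fun s : ℤ_[p] => binom j s := by
    intro j
    apply padic_continuous_of_mul_continuous (hfac j)
    have he : (fun s : ℤ_[p] => (j.factorial : ℤ_[p]) * binom j s) =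
        fun s => (descPochhammer ℤ_[p] j).eval s := by
      funext s; rw [← hbinom]
    rw [he]
    exact Polynomial.continuous _
  -- the family
  set F : ℤ_[p] → PowerSeries ℤ_[p] := fun s =>
    PowerSeries.mk fun n => ∑ j ∈ Finset.range (n + 1), binom j s * coeff (R := ℤ_[p]) n (g ^ j)
    with hFdef
  have hFcoeff : ∀ (s : ℤ_[p]) (n : ℕ),
      coeff (R := ℤ_[p]) n (F s) = ∑ j ∈ Finset.range (n + 1), binom j s * coeff (R := ℤ_[p]) n (g ^ j) := by
    intro s n
    rw [hFdef]
    exact PowerSeries.coeff_mk _ _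
  -- F at natural numbers
  have hknat : ∀ k : ℕ, F ((k : ℕ) : ℤ_[p]) = f ^ k := by
    intro k
    ext n
    rw [hFcoeff]
    have hexp : (coeff (R := ℤ_[p]) n) (f ^ k) =
        ∑ j ∈ Finset.range (k + 1), (k.choose j : ℤ_[p]) * coeff (R := ℤ_[p]) n (g ^ j) := by
      rw [hf, add_pow, map_sum]
      refine Finset.sum_congr rfl fun j _ => ?_
      rw [one_pow, mul_one, show ((k.choose j : ℕ) : PowerSeries ℤ_[p]) =
          PowerSeries.C (R := ℤ_[p]) (k.choose j : ℤ_[p]) from (map_natCast (C (R := ℤ_[p])) _).symm,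
        PowerSeries.coeff_mul_C, mul_comm]
    rw [hexp]
    have e1 : ∑ j ∈ Finset.range (n + 1), binom j ((k : ℕ) : ℤ_[p]) * coeff (R := ℤ_[p]) n (g ^ j)
        = ∑ j ∈ Finset.range (n + 1), (k.choose j : ℤ_[p]) * coeff (R := ℤ_[p]) n (g ^ j) :=
      Finset.sum_congr rfl fun j _ => by rw [hbnat]
    rw [e1]
    have e2 : ∑ j ∈ Finset.range (n + 1), (k.choose j : ℤ_[p]) * coeff (R := ℤ_[p]) n (g ^ j)
        = ∑ j ∈ Finset.range (max n k + 1), (k.choose j : ℤ_[p]) * coeff (R := ℤ_[p]) n (g ^ j) := by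
      refine Finset.sum_subset ?_ ?_
      · exact Finset.range_subset_range.2 (by omega)
      · intro j _ hj
        rw [Finset.mem_range, not_lt] at hj
        rw [hcoe n j (by omega), mul_zero]
    have e3 : ∑ j ∈ Finset.range (k + 1), (k.choose j : ℤ_[p]) * coeff (R := ℤ_[p]) n (g ^ j)
        = ∑ j ∈ Finset.range (max n k + 1), (k.choose j : ℤ_[p]) * coeff (R := ℤ_[p]) n (g ^ j) := by
      refine Finset.sum_subset ?_ ?_
      · exact Finset.range_subset_range.2 (by omega)
      · intro j _ hj
        rw [Finset.mem_range, not_lt] at hj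
        rw [Nat.choose_eq_zero_of_lt (by omega), Nat.cast_zero, zero_mul]
    rw [e2, ← e3]
  -- continuity of coefficients
  have hcont : ∀ n : ℕ, Continuous fun s : ℤ_[p] => coeff (R := ℤ_[p]) n (F s) := by
    intro n
    simp only [hFcoeff]
    exact continuous_finset_sum _ fun j _ => (hbcont j).mul continuous_const
  -- multiplicativity
  have hmul : ∀ s t : ℤ_[p], F (s + t) = F s * F t := by
    have key : ∀ n : ℕ, (fun st : ℤ_[p] × ℤ_[p] => coeff (R := ℤ_[p]) n (F (st.1 + st.2)))
        = fun st : ℤ_[p] × ℤ_[p] => coeff (R := ℤ_[p]) n (F st.1 * F st.2) := by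
      intro n
      have c1 : Continuous fun st : ℤ_[p] × ℤ_[p] => coeff (R := ℤ_[p]) n (F (st.1 + st.2)) := by
        simp only [hFcoeff]
        exact continuous_finset_sum _ fun j _ =>
          ((hbcont j).comp (continuous_fst.add continuous_snd)).mul continuous_const
      have cF : ∀ (m : ℕ), Continuous fun s : ℤ_[p] => coeff (R := ℤ_[p]) m (F s) := hcont
      have c2 : Continuous fun st : ℤ_[p] × ℤ_[p] => coeff (R := ℤ_[p]) n (F st.1 * F st.2) := by
        simp only [PowerSeries.coeff_mul]
        exact continuous_finset_sum _ fun ij _ =>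
          ((cF ij.1).comp continuous_fst).mul ((cF ij.2).comp continuous_snd)
      have hd : Dense (Set.range (Prod.map (Nat.cast : ℕ → ℤ_[p]) (Nat.cast : ℕ → ℤ_[p]))) :=
        (PadicInt.denseRange_natCast).prodMap PadicInt.denseRange_natCast
      refine Continuous.ext_on hd c1 c2 ?_
      rintro _ ⟨⟨k, l⟩, rfl⟩
      simp only [Prod.map_apply]
      show coeff (R := ℤ_[p]) n (F ((k : ℤ_[p]) + (l : ℤ_[p]))) = coeff (R := ℤ_[p]) n (F (k : ℤ_[p]) * F (l : ℤ_[p]))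
      rw [← Nat.cast_add, hknat, hknat, hknat, pow_add]
    intro s t
    ext n
    exact congrFun (key n) (s, t)
  exact ⟨F, hknat, hmul, hcont⟩
end

section
/- Let p be a prime, let u be an element of ℤ_p with 2p dividing u − 1, and let F be a formal power series over ℤ_p with coefficients a_0, a_1, a_2, …. For each natural number k, the series ∑_n a_n·(u^k − 1)^n converges in ℤ_p. Then there exists a continuous function L from ℤ_p to ℤ_p such that L(k) = ∑_n a_n·(u^k − 1)^n for every natural number k. -/
open Filter

section aux
variable {p : ℕ} [hp : Fact p.Prime]

lemma aux_norm_pow_sub_pow (x y : ℤ_[p]) (n : ℕ) : ‖x ^ n - y ^ n‖ ≤ ‖x - y‖ := by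
  obtain ⟨c, hc⟩ := sub_dvd_pow_sub_pow x y n
  rw [hc, norm_mul]
  exact mul_le_of_le_one_right (norm_nonneg _) (PadicInt.norm_le_one c)

lemma aux_one_sub_dvd (u : ℤ_[p]) (n : ℕ) : (u - 1) ∣ u ^ n - 1 := by
  simpa using sub_dvd_pow_sub_pow u 1 n

lemma aux_norm_le_inv_p {x : ℤ_[p]} (h : (p : ℤ_[p]) ∣ x) : ‖x‖ ≤ (p : ℝ)⁻¹ := by
  have h1 : ‖x‖ < 1 := (PadicInt.norm_lt_one_iff_dvd x).mpr h
  have := (PadicInt.norm_le_pow_iff_norm_lt_pow_add_one x (-1)).mpr (by simpa using h1)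
  simpa using this

lemma aux_p_dvd_u_sub_one {u : ℤ_[p]} (hu : (2 * p : ℤ_[p]) ∣ u - 1) :
    (p : ℤ_[p]) ∣ u - 1 := dvd_trans (dvd_mul_left _ _) hu

lemma aux_dvd_pow_p (u : ℤ_[p]) (hu : (2 * p : ℤ_[p]) ∣ u - 1) :
    (2 * p : ℤ_[p]) ∣ u ^ p - 1 := dvd_trans hu (aux_one_sub_dvd u p)

lemma aux_norm_upow_p (u : ℤ_[p]) (hu : (2 * p : ℤ_[p]) ∣ u - 1) :
    ‖u ^ p - 1‖ ≤ (p : ℝ)⁻¹ * ‖u - 1‖ := by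
  have hgeom : u ^ p - 1 = (∑ i ∈ Finset.range p, u ^ i) * (u - 1) := (geom_sum_mul u p).symm
  have hS : (p : ℤ_[p]) ∣ ∑ i ∈ Finset.range p, u ^ i := by
    have h1 : (p : ℤ_[p]) ∣ (∑ i ∈ Finset.range p, u ^ i) - ∑ _i ∈ Finset.range p, (1 : ℤ_[p]) := by
      rw [← Finset.sum_sub_distrib]
      exact Finset.dvd_sum fun i _ =>
        dvd_trans (aux_p_dvd_u_sub_one hu) (aux_one_sub_dvd u i)
    have h2 : (p : ℤ_[p]) ∣ ∑ _i ∈ Finset.range p, (1 : ℤ_[p]) := by simp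
    simpa using dvd_add h1 h2
  rw [hgeom, norm_mul]
  exact mul_le_mul_of_nonneg_right (aux_norm_le_inv_p hS) (norm_nonneg _)

lemma aux_key (d : ℕ) : ∀ u : ℤ_[p], (2 * p : ℤ_[p]) ∣ u - 1 →
    ‖u ^ d - 1‖ ≤ ‖u - 1‖ * ‖(d : ℤ_[p])‖ := by
  induction d using Nat.strong_induction_on with
  | _ d ih =>
    intro u hu
    rcases Nat.eq_zero_or_pos d with rfl | hd
    · simp
    by_cases hpd : p ∣ d
    · obtain ⟨e, rfl⟩ := hpd
      have hp2 : 2 ≤ p := hp.out.two_le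
      have he0 : 0 < e := by
        rcases Nat.eq_zero_or_pos e with rfl | h
        · simp at hd
        · exact h
      have he : e < p * e := by nlinarith
      have h1 := ih e he (u ^ p) (aux_dvd_pow_p u hu)
      have h2 : ‖u ^ (p * e) - 1‖ ≤ ‖u ^ p - 1‖ * ‖(e : ℤ_[p])‖ := by
        rw [pow_mul]; exact h1
      have h3 : ‖((p * e : ℕ) : ℤ_[p])‖ = (p : ℝ)⁻¹ * ‖(e : ℤ_[p])‖ := by
        push_cast
        rw [norm_mul, PadicInt.norm_p]
      calc ‖u ^ (p * e) - 1‖ ≤ ‖u ^ p - 1‖ * ‖(e : ℤ_[p])‖ := h2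
        _ ≤ ((p : ℝ)⁻¹ * ‖u - 1‖) * ‖(e : ℤ_[p])‖ :=
            mul_le_mul_of_nonneg_right (aux_norm_upow_p u hu) (norm_nonneg _)
        _ = ‖u - 1‖ * ((p : ℝ)⁻¹ * ‖(e : ℤ_[p])‖) := by ring
        _ = ‖u - 1‖ * ‖((p * e : ℕ) : ℤ_[p])‖ := by rw [h3]
    · have hnorm : ‖(d : ℤ_[p])‖ = 1 := by
        refine le_antisymm (PadicInt.norm_le_one _) ?_
        by_contra hlt
        push_neg at hlt
        have : ((p : ℤ) ∣ (d : ℤ)) := by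
          have := (PadicInt.norm_int_lt_one_iff_dvd (d : ℤ)).mp (by
            push_cast
            exact hlt)
          exact this
        exact hpd (Int.ofNat_dvd.mp this)
      rw [hnorm, mul_one]
      simpa using aux_norm_pow_sub_pow u 1 d

end aux

/-- for `u ∈ ℤ_p` with `2p ∣ u − 1` and `F ∈ ℤ_p[[T]]` with coefficients
`a_n`, there is a continuous `L : ℤ_p → ℤ_p` with `L k = ∑_n a_n (u^k − 1)^n`
(in particular each of these series converges) for every natural number `k`. -/
theorem stmt9 (p : ℕ) [Fact p.Prime] (u : ℤ_[p]) (hu : (2 * p : ℤ_[p]) ∣ u - 1)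
    (F : PowerSeries ℤ_[p]) :
    ∃ L : ℤ_[p] → ℤ_[p], Continuous L ∧
      ∀ k : ℕ, HasSum (fun n : ℕ => PowerSeries.coeff n F * (u ^ k - 1) ^ n)
        (L (k : ℤ_[p])) := by
  classical
  have hprime : p.Prime := Fact.out
  set a : ℕ → ℤ_[p] := fun n => PowerSeries.coeff n F with ha
  have hu1 : ‖u - 1‖ ≤ (p : ℝ)⁻¹ := aux_norm_le_inv_p (aux_p_dvd_u_sub_one hu)
  have hplt : (1 : ℝ) < p := by exact_mod_cast hprime.one_lt
  have hru : ‖u - 1‖ < 1 := hu1.trans_lt (by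
    rw [inv_lt_one_iff₀]
    right; exact hplt)
  have hxk : ∀ k : ℕ, ‖u ^ k - 1‖ < 1 := fun k =>
    lt_of_le_of_lt (by simpa using aux_norm_pow_sub_pow u 1 k) hru
  have hsum : ∀ k : ℕ, Summable (fun n : ℕ => a n * (u ^ k - 1) ^ n) := by
    intro k
    apply NonarchimedeanAddGroup.summable_of_tendsto_cofinite_zero
    rw [Nat.cofinite_eq_atTop, tendsto_zero_iff_norm_tendsto_zero]
    refine squeeze_zero (fun n => norm_nonneg _) (fun n => ?_)
      (tendsto_pow_atTop_nhds_zero_of_lt_one (norm_nonneg _) (hxk k))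
    rw [norm_mul, norm_pow]
    exact mul_le_of_le_one_left (pow_nonneg (norm_nonneg _) n) (PadicInt.norm_le_one _)
  set f : ℕ → ℤ_[p] := fun k => ∑' n, a n * (u ^ k - 1) ^ n with hf
  have hLipmain : ∀ k l : ℕ, l ≤ k → ‖f k - f l‖ ≤ ‖(k : ℤ_[p]) - (l : ℤ_[p])‖ := by
    intro k l hlk
    have hcast : ((k - l : ℕ) : ℤ_[p]) = (k : ℤ_[p]) - (l : ℤ_[p]) := by
      push_cast [Nat.cast_sub hlk]; ring
    have hstep : ∀ n : ℕ,
        ‖a n * (u ^ k - 1) ^ n - a n * (u ^ l - 1) ^ n‖ ≤ ‖(k : ℤ_[p]) - (l : ℤ_[p])‖ := by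
      intro n
      rw [← mul_sub, norm_mul]
      have h1 : ‖(u ^ k - 1) ^ n - (u ^ l - 1) ^ n‖ ≤ ‖(u ^ k - 1) - (u ^ l - 1)‖ :=
        aux_norm_pow_sub_pow _ _ n
      have h2 : (u ^ k - 1) - (u ^ l - 1) = u ^ l * (u ^ (k - l) - 1) := by
        rw [sub_sub_sub_cancel_right, mul_sub, mul_one, ← pow_add,
          Nat.add_sub_cancel' hlk]
      have h3 : ‖(u ^ k - 1) - (u ^ l - 1)‖ ≤ ‖(k : ℤ_[p]) - (l : ℤ_[p])‖ := by
        rw [h2, norm_mul]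
        calc ‖u ^ l‖ * ‖u ^ (k - l) - 1‖ ≤ 1 * ‖u ^ (k - l) - 1‖ :=
              mul_le_mul_of_nonneg_right (PadicInt.norm_le_one _) (norm_nonneg _)
          _ = ‖u ^ (k - l) - 1‖ := one_mul _
          _ ≤ ‖u - 1‖ * ‖((k - l : ℕ) : ℤ_[p])‖ := aux_key (k - l) u hu
          _ ≤ 1 * ‖((k - l : ℕ) : ℤ_[p])‖ :=
              mul_le_mul_of_nonneg_right (PadicInt.norm_le_one _) (norm_nonneg _)
          _ = ‖(k : ℤ_[p]) - (l : ℤ_[p])‖ := by rw [one_mul, hcast]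
      calc ‖a n‖ * ‖(u ^ k - 1) ^ n - (u ^ l - 1) ^ n‖
          ≤ 1 * ‖(u ^ k - 1) ^ n - (u ^ l - 1) ^ n‖ :=
            mul_le_mul_of_nonneg_right (PadicInt.norm_le_one _) (norm_nonneg _)
        _ = ‖(u ^ k - 1) ^ n - (u ^ l - 1) ^ n‖ := one_mul _
        _ ≤ ‖(k : ℤ_[p]) - (l : ℤ_[p])‖ := h1.trans h3
    have hsub : HasSum (fun n => a n * (u ^ k - 1) ^ n - a n * (u ^ l - 1) ^ n) (f k - f l) :=
      (hsum k).hasSum.sub (hsum l).hasSum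
    rw [← hsub.tsum_eq]
    exact IsUltrametricDist.norm_tsum_le_of_forall_le_of_nonneg (norm_nonneg _) hstep
  have hLip : ∀ k l : ℕ, ‖f k - f l‖ ≤ ‖(k : ℤ_[p]) - (l : ℤ_[p])‖ := by
    intro k l
    rcases le_total l k with h | h
    · exact hLipmain k l h
    · rw [norm_sub_rev, norm_sub_rev ((k : ℤ_[p]))]
      exact hLipmain l k h
  let D : Set ℤ_[p] := Set.range (Nat.cast : ℕ → ℤ_[p])
  have hui : IsUniformInducing (Subtype.val : D → ℤ_[p]) :=
    isUniformEmbedding_subtype_val.isUniformInducing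
  have hdense : DenseRange (Subtype.val : D → ℤ_[p]) := by
    rw [DenseRange, Subtype.range_coe]
    exact PadicInt.denseRange_natCast
  let g : D → ℤ_[p] := fun x => f (Set.mem_range.mp x.2).choose
  have hgL : ∀ x y : D, ‖g x - g y‖ ≤ ‖(x : ℤ_[p]) - (y : ℤ_[p])‖ := by
    intro x y
    have hx := (Set.mem_range.mp x.2).choose_spec
    have hy := (Set.mem_range.mp y.2).choose_spec
    have := hLip (Set.mem_range.mp x.2).choose (Set.mem_range.mp y.2).choose
    rwa [hx, hy] at this
  have hgU : UniformContinuous g := by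
    refine (LipschitzWith.of_dist_le_mul (K := 1) fun x y => ?_).uniformContinuous
    rw [NNReal.coe_one, one_mul, Subtype.dist_eq x y, dist_eq_norm, dist_eq_norm]
    exact hgL x y
  refine ⟨(hui.isDenseInducing hdense).extend g,
    (uniformContinuous_uniformly_extend hui hdense hgU).continuous, ?_⟩
  intro k
  have hmem : (k : ℤ_[p]) ∈ D := ⟨k, rfl⟩
  have h1 : (hui.isDenseInducing hdense).extend g (k : ℤ_[p]) = g ⟨(k : ℤ_[p]), hmem⟩ :=
    uniformly_extend_of_ind hui hdense hgU ⟨(k : ℤ_[p]), hmem⟩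
  have h2 : g ⟨(k : ℤ_[p]), hmem⟩ = f k := by
    have hs := (Set.mem_range.mp hmem).choose_spec
    exact congrArg f (Nat.cast_injective hs)
  rw [h1, h2]
  exact (hsum k).hasSum
end

section
/- Let p be a prime and let u be an element of ℤ_p with 2p dividing u − 1 and u ≠ 1. For a formal power series F over ℤ_p with coefficients a_0, a_1, … and for z ∈ ℤ_p divisible by p, write F(z) for the sum of the convergent series ∑_n a_n·z^n. If F and G are two formal power series over ℤ_p such that F(u^k − 1) = G(u^k − 1) for infinitely many natural numbers k, then F = G. -/
open Filter Finset

variable {p : ℕ} [hp : Fact p.Prime]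

lemma psumm (c : ℕ → ℤ_[p]) {z : ℤ_[p]} (hz : ‖z‖ < 1) :
    Summable (fun n => c n * z ^ n) := by
  apply Summable.of_norm_bounded (g := fun n => ‖z‖ ^ n)
    (summable_geometric_of_lt_one (norm_nonneg z) hz)
  intro n
  rw [norm_mul, norm_pow]
  exact mul_le_of_le_one_left (by positivity) (PadicInt.norm_le_one _)

lemma keyA (c : ℕ → ℤ_[p]) (T : Set ℤ_[p])
    (hT : ∀ t ∈ T, t ≠ 0 ∧ ‖t‖ < 1 ∧ ∑' n, c n * t ^ n = 0)
    (hacc : ∀ ε > 0, ∃ t ∈ T, ‖t‖ < ε) : ∀ m, c m = 0 := by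
  have step : ∀ m, (∀ t ∈ T, ∑' n, c (n + m) * t ^ n = 0) →
      c m = 0 ∧ ∀ t ∈ T, ∑' n, c (n + (m + 1)) * t ^ n = 0 := by
    intro m hQ
    have hsplit : ∀ t ∈ T, c m + t * ∑' n, c (n + (m + 1)) * t ^ n = 0 := by
      intro t htT
      obtain ⟨ht0, htlt, -⟩ := hT t htT
      have hs : Summable (fun n => c (n + m) * t ^ n) := psumm _ htlt
      have h0 := hQ t htT
      rw [hs.tsum_eq_zero_add] at h0
      simp only [zero_add, pow_zero, mul_one] at h0
      rw [← h0]
      congr 1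
      have hs1 : Summable (fun n => c (n + (m + 1)) * t ^ n) := psumm _ htlt
      rw [← hs1.tsum_mul_left t]
      apply tsum_congr
      intro n
      rw [show n + 1 + m = n + (m + 1) by ring]
      ring
    have hcm : c m = 0 := by
      by_contra hc
      obtain ⟨t, htT, htn⟩ := hacc ‖c m‖ (norm_pos_iff.mpr hc)
      have h0 := hsplit t htT
      have hcm : c m = -(t * ∑' n, c (n + (m + 1)) * t ^ n) := by
        rw [eq_neg_iff_add_eq_zero]; exact h0
      have hn : ‖c m‖ ≤ ‖t‖ := by
        rw [hcm, norm_neg, norm_mul]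
        exact mul_le_of_le_one_right (norm_nonneg _) (PadicInt.norm_le_one _)
      exact absurd hn (not_le.mpr htn)
    refine ⟨hcm, fun t htT => ?_⟩
    have h0 := hsplit t htT
    rw [hcm, zero_add] at h0
    rcases mul_eq_zero.mp h0 with h | h
    · exact absurd h (hT t htT).1
    · exact h
  have Q : ∀ m, ∀ t ∈ T, ∑' n, c (n + m) * t ^ n = 0 := by
    intro m
    induction m with
    | zero => intro t htT; simpa using (hT t htT).2.2
    | succ m ih => exact (step m ih).2
  exact fun m => (step m (Q m)).1

lemma keyB (c : ℕ → ℤ_[p]) {a t : ℤ_[p]} {r : ℝ} (hr0 : 0 ≤ r) (hr : r < 1)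
    (ha : ‖a‖ ≤ r) (ht : ‖t‖ ≤ r) :
    ∑' n, c n * (a + t) ^ n
      = ∑' m, (∑' n, c n * (n.choose m : ℤ_[p]) * a ^ (n - m)) * t ^ m := by
  set h : ℕ × ℕ → ℤ_[p] :=
    fun q => c q.1 * (q.1.choose q.2 : ℤ_[p]) * a ^ (q.1 - q.2) * t ^ q.2 with hh_def
  have hrabs : ‖r‖ < 1 := by rwa [Real.norm_of_nonneg hr0]
  have hgeo : Summable (fun n : ℕ => r ^ n) := summable_geometric_of_lt_one hr0 hr
  have hbound : ∀ q : ℕ × ℕ, ‖h q‖ ≤ (if q.2 ≤ q.1 then r ^ q.1 else 0) := by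
    rintro ⟨n, m⟩
    by_cases hmn : m ≤ n
    · simp only [hmn, if_true]
      have h1 : ‖h (n, m)‖ ≤ ‖a‖ ^ (n - m) * ‖t‖ ^ m := by
        simp only [hh_def, norm_mul, norm_pow]
        calc ‖c n‖ * ‖((n.choose m : ℕ) : ℤ_[p])‖ * ‖a‖ ^ (n - m) * ‖t‖ ^ m
            ≤ 1 * 1 * ‖a‖ ^ (n - m) * ‖t‖ ^ m := by
              gcongr <;> exact PadicInt.norm_le_one _
          _ = ‖a‖ ^ (n - m) * ‖t‖ ^ m := by ring
      refine h1.trans ?_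
      calc ‖a‖ ^ (n - m) * ‖t‖ ^ m ≤ r ^ (n - m) * r ^ m := by
            gcongr <;> first | exact norm_nonneg _ | assumption
        _ = r ^ n := by rw [← pow_add, Nat.sub_add_cancel hmn]
    · simp only [hmn, if_false]
      have : n.choose m = 0 := Nat.choose_eq_zero_of_lt (not_le.mp hmn)
      simp [hh_def, this]
  have hgsum : Summable (fun q : ℕ × ℕ => if q.2 ≤ q.1 then r ^ q.1 else 0) := by
    rw [summable_prod_of_nonneg (by intro q; dsimp only; positivity)]
    constructor
    · intro n
      exact summable_of_ne_finset_zero (s := Finset.range (n + 1))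
        (by intro m hm; simp only [Finset.mem_range, not_lt] at hm
            exact if_neg (by omega))
    · apply Summable.congr ((summable_pow_mul_geometric_of_norm_lt_one 1 hrabs).add hgeo)
      intro n
      rw [tsum_eq_sum (s := Finset.range (n + 1))
        (by intro m hm; simp only [Finset.mem_range, not_lt] at hm
            exact if_neg (by omega))]
      rw [Finset.sum_congr rfl fun m hm => if_pos (Finset.mem_range_succ_iff.mp hm)]
      show (n:ℝ) ^ 1 * r ^ n + r ^ n = ∑ _b ∈ Finset.range n.succ, r ^ n
      rw [Finset.sum_const, Finset.card_range, nsmul_eq_mul]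
      push_cast
      ring
  have hh : Summable h := Summable.of_norm_bounded hgsum hbound
  have step1 : ∑' n, c n * (a + t) ^ n = ∑' n, ∑' m, h (n, m) := by
    apply tsum_congr
    intro n
    rw [tsum_eq_sum (s := Finset.range (n + 1))
      (by intro m hm
          simp only [Finset.mem_range, not_lt] at hm
          have : n.choose m = 0 := Nat.choose_eq_zero_of_lt (by omega)
          simp [hh_def, this])]
    rw [add_comm a t, add_pow, Finset.mul_sum]
    exact Finset.sum_congr rfl fun m _ => by simp only [hh_def]; ring
  have step2 : ∑' n, ∑' m, h (n, m) = ∑' m, ∑' n, h (n, m) :=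
    (Summable.tsum_comm (f := fun n m => h (n, m)) (by exact hh)).symm
  rw [step1, step2]
  apply tsum_congr
  intro m
  have hsm : Summable (fun n => c n * (n.choose m : ℤ_[p]) * a ^ (n - m)) := by
    apply Summable.of_norm_bounded (g := fun n : ℕ => r ^ (n - m))
    · exact (summable_nat_add_iff m).mp
        (hgeo.congr (by intro n; rw [Nat.add_sub_cancel]))
    · intro n
      simp only [norm_mul, norm_pow]
      calc ‖c n‖ * ‖((n.choose m : ℕ) : ℤ_[p])‖ * ‖a‖ ^ (n - m)
          ≤ 1 * 1 * r ^ (n - m) := by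
            gcongr <;> first | exact PadicInt.norm_le_one _ | exact norm_nonneg _ | assumption
        _ = r ^ (n - m) := by ring
  rw [← hsm.tsum_mul_right]

lemma norm_t_le (u : ℤ_[p]) (hu : (2 * p : ℤ_[p]) ∣ u - 1) :
    ‖u - 1‖ ≤ ‖(2 : ℤ_[p])‖ * (p : ℝ)⁻¹ := by
  obtain ⟨x, hx⟩ := hu
  rw [hx, norm_mul, norm_mul, PadicInt.norm_p]
  have : ‖x‖ ≤ 1 := PadicInt.norm_le_one x
  have h2 : (0:ℝ) ≤ ‖(2:ℤ_[p])‖ * (p:ℝ)⁻¹ := by positivity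
  calc ‖(2 : ℤ_[p])‖ * (p : ℝ)⁻¹ * ‖x‖ ≤ ‖(2 : ℤ_[p])‖ * (p : ℝ)⁻¹ * 1 := by gcongr
    _ = ‖(2 : ℤ_[p])‖ * (p : ℝ)⁻¹ := mul_one _

lemma norm_t_le' (u : ℤ_[p]) (hu : (2 * p : ℤ_[p]) ∣ u - 1) : ‖u - 1‖ ≤ (p : ℝ)⁻¹ :=
  (norm_t_le u hu).trans (by
    have : ‖(2:ℤ_[p])‖ ≤ 1 := PadicInt.norm_le_one _
    have h0 : (0:ℝ) ≤ (p:ℝ)⁻¹ := by positivity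
    calc ‖(2:ℤ_[p])‖ * (p:ℝ)⁻¹ ≤ 1 * (p:ℝ)⁻¹ := by gcongr
      _ = (p:ℝ)⁻¹ := one_mul _)

lemma pinv_lt_one : ((p : ℝ)⁻¹ : ℝ) < 1 := by
  have h1 : (1:ℝ) < (p:ℝ) := by exact_mod_cast hp.out.one_lt
  rw [inv_lt_one_iff₀]; right; exact h1

lemma torsionfree :
    ∀ m : ℕ, 0 < m → ∀ u : ℤ_[p], (2 * p : ℤ_[p]) ∣ u - 1 → u ≠ 1 → u ^ m ≠ 1 := by
  intro m
  induction m using Nat.strong_induction_on with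
  | _ m ih =>
  intro hm u hu hu1 hum
  have ht0 : u - 1 ≠ 0 := sub_ne_zero.mpr hu1
  have hgs : (∑ i ∈ Finset.range m, u ^ i) = 0 := by
    have h := geom_sum_mul u m
    rw [hum, sub_self] at h
    exact (mul_eq_zero.mp h).resolve_right ht0
  have hdvd_each : ∀ i : ℕ, (u - 1) ∣ (u ^ i - 1) := fun i => by
    simpa using sub_dvd_pow_sub_pow u 1 i
  have hgsum_sub : ∀ N : ℕ, (u - 1) ∣ (∑ i ∈ Finset.range N, u ^ i) - (N : ℤ_[p]) := by
    intro N
    have heq : (∑ i ∈ Finset.range N, u ^ i) - (N : ℤ_[p])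
        = ∑ i ∈ Finset.range N, (u ^ i - 1) := by
      rw [Finset.sum_sub_distrib]
      simp
    rw [heq]
    exact Finset.dvd_sum fun i _ => hdvd_each i
  have hsm : (u - 1) ∣ (m : ℤ_[p]) := by
    have h1 := hgsum_sub m
    rw [hgs, zero_sub] at h1
    exact (dvd_neg.mp h1)
  have hnorm_m : ‖((m : ℤ) : ℤ_[p])‖ < 1 := by
    obtain ⟨y, hy⟩ := hsm
    push_cast
    rw [hy, norm_mul]
    calc ‖u - 1‖ * ‖y‖ ≤ (p:ℝ)⁻¹ * 1 := by
          gcongr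
          · exact norm_t_le' u hu
          · exact PadicInt.norm_le_one y
      _ = (p:ℝ)⁻¹ := mul_one _
      _ < 1 := pinv_lt_one
  have hpm : p ∣ m := by
    have := (PadicInt.norm_int_lt_one_iff_dvd (m : ℤ)).mp hnorm_m
    exact_mod_cast this
  -- the geometric sum of length p is nonzero
  have hppos : (0:ℝ) < (p:ℝ)⁻¹ := by
    have : (0:ℝ) < (p:ℝ) := by exact_mod_cast hp.out.pos
    positivity
  have hsp : (∑ i ∈ Finset.range p, u ^ i) ≠ 0 := by
    intro hsp0
    set G : ℤ_[p] := ∑ i ∈ Finset.range p, (∑ j ∈ Finset.range i, u ^ j) with hGdef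
    have hG : (∑ i ∈ Finset.range p, u ^ i) - ((p : ℕ) : ℤ_[p]) = (u - 1) * G := by
      have heq : (∑ i ∈ Finset.range p, u ^ i) - ((p : ℕ) : ℤ_[p])
          = ∑ i ∈ Finset.range p, (u ^ i - 1) := by
        rw [Finset.sum_sub_distrib]; simp
      rw [heq, hGdef, Finset.mul_sum]
      exact Finset.sum_congr rfl fun i _ => by
        rw [mul_comm, geom_sum_mul]
    have hpeq : ((p : ℕ) : ℤ_[p]) = -((u - 1) * G) := by
      rw [← hG, hsp0, zero_sub, neg_neg]
    have hnormp : ‖((p:ℕ) : ℤ_[p])‖ = (p:ℝ)⁻¹ := PadicInt.norm_p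
    have hkey : ‖((p:ℕ) : ℤ_[p])‖ = ‖u - 1‖ * ‖G‖ := by
      rw [hpeq, norm_neg, norm_mul]
    rcases hp.out.eq_two_or_odd' with h2 | hodd
    · -- p = 2 : ‖u-1‖ ≤ 1/4
      subst h2
      have h2norm : ‖(2 : ℤ_[2])‖ = ((2:ℕ):ℝ)⁻¹ := by
        rw [show (2 : ℤ_[2]) = ((2:ℕ) : ℤ_[2]) by norm_num]
        exact hnormp
      have hlt : ‖u - 1‖ * ‖G‖ < ((2:ℕ):ℝ)⁻¹ := by
        calc ‖u - 1‖ * ‖G‖ ≤ (((2:ℕ):ℝ)⁻¹ * ((2:ℕ):ℝ)⁻¹) * 1 := by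
              gcongr
              · exact (norm_t_le u hu).trans (by rw [h2norm])
              · exact PadicInt.norm_le_one G
          _ = ((2:ℕ):ℝ)⁻¹ * ((2:ℕ):ℝ)⁻¹ := mul_one _
          _ < 1 * ((2:ℕ):ℝ)⁻¹ := by gcongr; exact pinv_lt_one (p := 2)
          _ = ((2:ℕ):ℝ)⁻¹ := one_mul _
      have hfin : ((2:ℕ):ℝ)⁻¹ = ‖u - 1‖ * ‖G‖ := by rw [← hnormp]; exact hkey
      exact absurd hfin (ne_of_gt hlt)
    · -- p odd : p ∣ T so ‖G‖ ≤ 1/p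
      have hTdvd : p ∣ ∑ i ∈ Finset.range p, i := by
        have h1 : p ∣ (∑ i ∈ Finset.range p, i) * 2 := by
          rw [Finset.sum_range_id_mul_two]
          exact Dvd.intro _ rfl
        rcases (Nat.Prime.dvd_mul hp.out).mp h1 with h | h
        · exact h
        · exact absurd ((Nat.prime_dvd_prime_iff_eq hp.out Nat.prime_two).mp h)
            (by rintro rfl; simp [Nat.odd_iff] at hodd)
      have hTnorm : ‖((∑ i ∈ Finset.range p, i : ℕ) : ℤ_[p])‖ ≤ (p:ℝ)⁻¹ := by
        obtain ⟨T', hT'⟩ := hTdvd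
        rw [hT']
        push_cast
        rw [norm_mul, hnormp]
        calc (p:ℝ)⁻¹ * ‖((T' : ℕ) : ℤ_[p])‖ ≤ (p:ℝ)⁻¹ * 1 := by
              gcongr; exact PadicInt.norm_le_one _
          _ = (p:ℝ)⁻¹ := mul_one _
      have hGT : (u - 1) ∣ G - ((∑ i ∈ Finset.range p, i : ℕ) : ℤ_[p]) := by
        have heq : G - ((∑ i ∈ Finset.range p, i : ℕ) : ℤ_[p])
            = ∑ i ∈ Finset.range p, ((∑ j ∈ Finset.range i, u ^ j) - (i : ℤ_[p])) := by
          rw [Finset.sum_sub_distrib, hGdef]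
          push_cast
          ring
        rw [heq]
        exact Finset.dvd_sum fun i _ => hgsum_sub i
      have hGnorm : ‖G‖ ≤ (p:ℝ)⁻¹ := by
        have hsplit : G = ((∑ i ∈ Finset.range p, i : ℕ) : ℤ_[p])
            + (G - ((∑ i ∈ Finset.range p, i : ℕ) : ℤ_[p])) := by ring
        obtain ⟨w, hw⟩ := hGT
        have hw_norm : ‖G - ((∑ i ∈ Finset.range p, i : ℕ) : ℤ_[p])‖ ≤ (p:ℝ)⁻¹ := by
          rw [hw, norm_mul]
          calc ‖u - 1‖ * ‖w‖ ≤ (p:ℝ)⁻¹ * 1 := by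
                gcongr
                · exact norm_t_le' u hu
                · exact PadicInt.norm_le_one w
            _ = (p:ℝ)⁻¹ := mul_one _
        calc ‖G‖ = ‖((∑ i ∈ Finset.range p, i : ℕ) : ℤ_[p])
              + (G - ((∑ i ∈ Finset.range p, i : ℕ) : ℤ_[p]))‖ := by rw [← hsplit]
          _ ≤ max ‖((∑ i ∈ Finset.range p, i : ℕ) : ℤ_[p])‖
              ‖G - ((∑ i ∈ Finset.range p, i : ℕ) : ℤ_[p])‖ := PadicInt.nonarchimedean _ _
          _ ≤ (p:ℝ)⁻¹ := max_le hTnorm hw_norm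
      have hlt : ‖u - 1‖ * ‖G‖ < (p:ℝ)⁻¹ := by
        calc ‖u - 1‖ * ‖G‖ ≤ (p:ℝ)⁻¹ * (p:ℝ)⁻¹ :=
              mul_le_mul (norm_t_le' u hu) hGnorm (norm_nonneg _) (by positivity)
          _ < 1 * (p:ℝ)⁻¹ := by gcongr; exact pinv_lt_one
          _ = (p:ℝ)⁻¹ := one_mul _
      have hfin : ((p:ℕ):ℝ)⁻¹ = ‖u - 1‖ * ‖G‖ := by rw [← hnormp]; exact hkey
      exact absurd hfin (ne_of_gt hlt)
  -- recursion
  set m' := m / p with hm'def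
  have hm'pos : 0 < m' := Nat.div_pos (Nat.le_of_dvd hm hpm) hp.out.pos
  have hm'lt : m' < m := Nat.div_lt_self hm hp.out.one_lt
  have hmm : m = p * m' := (Nat.mul_div_cancel' hpm).symm
  set v := u ^ p with hvdef
  have hv1 : v - 1 = (∑ i ∈ Finset.range p, u ^ i) * (u - 1) := (geom_sum_mul u p).symm
  have hvne : v ≠ 1 := by
    intro hv
    rw [hv, sub_self] at hv1
    exact (mul_ne_zero hsp ht0) hv1.symm
  have hvdvd : (2 * p : ℤ_[p]) ∣ v - 1 := by
    rw [hv1]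
    exact Dvd.dvd.mul_left hu _
  have hvm : v ^ m' = 1 := by
    rw [hvdef, ← pow_mul, ← hmm, hum]
  exact ih m' hm'lt hm'pos v hvdvd hvne hvm

/-- identity principle. If `2p ∣ u − 1`, `u ≠ 1`, and two power series
`F, G` over `ℤ_p` satisfy `F(u^k − 1) = G(u^k − 1)` (sums of the convergent series)
for infinitely many `k : ℕ`, then `F = G`. -/
theorem stmt10 (p : ℕ) [Fact p.Prime] (u : ℤ_[p]) (hu : (2 * p : ℤ_[p]) ∣ u - 1)
    (hu1 : u ≠ 1) (F G : PowerSeries ℤ_[p])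
    (h : {k : ℕ | (∑' n : ℕ, PowerSeries.coeff n F * (u ^ k - 1) ^ n) =
        ∑' n : ℕ, PowerSeries.coeff n G * (u ^ k - 1) ^ n}.Infinite) :
    F = G := by
  classical
  set c : ℕ → ℤ_[p] :=
    fun n => PowerSeries.coeff n F - PowerSeries.coeff n G with hc_def
  have hr0 : (0:ℝ) ≤ (p:ℝ)⁻¹ := by positivity
  have hr1 : ((p:ℝ)⁻¹) < 1 := pinv_lt_one
  have hu0 : u ≠ 0 := by
    intro h0
    have := norm_t_le' u hu
    rw [h0, zero_sub, norm_neg, norm_one] at this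
    exact absurd this (not_le.mpr hr1)
  have hzk_norm : ∀ k : ℕ, ‖u ^ k - 1‖ ≤ (p:ℝ)⁻¹ := by
    intro k
    obtain ⟨y, hy⟩ := sub_dvd_pow_sub_pow u 1 k
    rw [one_pow] at hy
    rw [hy, norm_mul]
    calc ‖u - 1‖ * ‖y‖ ≤ (p:ℝ)⁻¹ * 1 := by
          gcongr
          · exact norm_t_le' u hu
          · exact PadicInt.norm_le_one y
      _ = (p:ℝ)⁻¹ := mul_one _
  set S : Set ℕ := {k : ℕ | (∑' n : ℕ, PowerSeries.coeff n F * (u ^ k - 1) ^ n) =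
        ∑' n : ℕ, PowerSeries.coeff n G * (u ^ k - 1) ^ n} with hS_def
  have hzero : ∀ k ∈ S, ∑' n, c n * (u ^ k - 1) ^ n = 0 := by
    intro k hk
    have hlt : ‖u ^ k - 1‖ < 1 := lt_of_le_of_lt (hzk_norm k) hr1
    have hFs : Summable (fun n => PowerSeries.coeff n F * (u ^ k - 1) ^ n) :=
      psumm _ hlt
    have hGs : Summable (fun n => PowerSeries.coeff n G * (u ^ k - 1) ^ n) :=
      psumm _ hlt
    have : ∑' n, c n * (u ^ k - 1) ^ n
        = (∑' n, PowerSeries.coeff n F * (u ^ k - 1) ^ n)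
          - ∑' n, PowerSeries.coeff n G * (u ^ k - 1) ^ n := by
      rw [← Summable.tsum_sub hFs hGs]
      exact tsum_congr fun n => by rw [hc_def]; ring
    rw [this, hk, sub_self]
  -- injectivity of k ↦ u^k - 1
  have hkey : ∀ a b : ℕ, a < b → u ^ a = u ^ b → False := by
    intro a b hab heq
    have h1 : u ^ a * (u ^ (b - a) - 1) = 0 := by
      rw [mul_sub, mul_one, ← pow_add]
      rw [show a + (b - a) = b by omega, heq, sub_self]
    have h2 : u ^ (b - a) - 1 = 0 :=
      (mul_eq_zero.mp h1).resolve_left (pow_ne_zero a hu0)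
    exact torsionfree (b - a) (by omega) u hu hu1 (sub_eq_zero.mp h2)
  have hinj : Function.Injective (fun k : ℕ => u ^ k - 1) := by
    intro a b hab
    simp only [sub_left_inj] at hab
    rcases lt_trichotomy a b with hl | he | hg
    · exact absurd hab (by intro hx; exact hkey a b hl hx)
    · exact he
    · exact absurd hab (by intro hx; exact hkey b a hg hx.symm)
  set Z : Set ℤ_[p] := (fun k : ℕ => u ^ k - 1) '' S with hZ_def
  have hZinf : Z.Infinite := Set.Infinite.image (Function.Injective.injOn hinj) h
  have hZnorm : ∀ w ∈ Z, ‖w‖ ≤ (p:ℝ)⁻¹ := by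
    rintro w ⟨k, hk, rfl⟩
    exact hzk_norm k
  have hZzero : ∀ w ∈ Z, ∑' n, c n * w ^ n = 0 := by
    rintro w ⟨k, hk, rfl⟩
    exact hzero k hk
  obtain ⟨z₀, hz0acc⟩ := hZinf.exists_accPt_principal
  have hz0norm : ‖z₀‖ ≤ (p:ℝ)⁻¹ := by
    have hcl : z₀ ∈ closure Z := mem_closure_iff_clusterPt.mpr hz0acc.clusterPt
    have hsub : closure Z ⊆ {x : ℤ_[p] | ‖x‖ ≤ (p:ℝ)⁻¹} :=
      closure_minimal hZnorm (isClosed_le continuous_norm continuous_const)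
    exact hsub hcl
  set T : Set ℤ_[p] := {t | t ≠ 0 ∧ z₀ + t ∈ Z} with hT_def
  have hTnorm : ∀ t ∈ T, ‖t‖ ≤ (p:ℝ)⁻¹ := by
    rintro t ⟨ht0, htZ⟩
    have : t = (z₀ + t) + (-z₀) := by ring
    rw [this]
    calc ‖(z₀ + t) + (-z₀)‖ ≤ max ‖z₀ + t‖ ‖-z₀‖ := PadicInt.nonarchimedean _ _
      _ ≤ (p:ℝ)⁻¹ := max_le (hZnorm _ htZ) (by rw [norm_neg]; exact hz0norm)
  have hb : ∀ m, (∑' n, c n * (n.choose m : ℤ_[p]) * z₀ ^ (n - m)) = 0 := by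
    apply keyA (fun m => ∑' n, c n * (n.choose m : ℤ_[p]) * z₀ ^ (n - m)) T
    · rintro t htT
      obtain ⟨ht0, htZ⟩ := htT
      refine ⟨ht0, lt_of_le_of_lt (hTnorm t ⟨ht0, htZ⟩) hr1, ?_⟩
      rw [← keyB c hr0 hr1 hz0norm (hTnorm t ⟨ht0, htZ⟩)]
      exact hZzero _ htZ
    · intro ε hε
      obtain ⟨y, hyU, hyne⟩ := (accPt_iff_nhds (x := z₀) (C := Z)).mp hz0acc
        (Metric.ball z₀ ε) (Metric.ball_mem_nhds z₀ hε)
      refine ⟨y - z₀, ⟨sub_ne_zero.mpr hyne, by rw [add_sub_cancel]; exact hyU.2⟩, ?_⟩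
      rw [← dist_eq_norm]
      exact Metric.mem_ball.mp hyU.1
  have hzero2 : ∀ w : ℤ_[p], ‖w‖ ≤ (p:ℝ)⁻¹ → ∑' n, c n * w ^ n = 0 := by
    intro w hw
    have htn : ‖w - z₀‖ ≤ (p:ℝ)⁻¹ := by
      calc ‖w - z₀‖ = ‖w + (-z₀)‖ := by ring_nf
        _ ≤ max ‖w‖ ‖-z₀‖ := PadicInt.nonarchimedean _ _
        _ ≤ (p:ℝ)⁻¹ := max_le hw (by rw [norm_neg]; exact hz0norm)
    have hkB := keyB c hr0 hr1 hz0norm htn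
    rw [show z₀ + (w - z₀) = w by ring] at hkB
    rw [hkB]
    rw [tsum_congr fun m => by rw [hb m, zero_mul]]
    exact tsum_zero
  have hc0 : ∀ n, c n = 0 := by
    apply keyA c {x : ℤ_[p] | x ≠ 0 ∧ ‖x‖ ≤ (p:ℝ)⁻¹}
    · rintro t ⟨ht0, htn⟩
      exact ⟨ht0, lt_of_le_of_lt htn hr1, hzero2 t htn⟩
    · intro ε hε
      obtain ⟨j, hj⟩ := exists_pow_lt_of_lt_one hε hr1
      refine ⟨(p : ℤ_[p]) ^ (j + 1), ⟨pow_ne_zero _ ?_, ?_⟩, ?_⟩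
      · intro hp0
        have := PadicInt.norm_p (p := p)
        rw [hp0, norm_zero] at this
        have h1 : (1:ℝ) ≤ (p:ℝ) := by exact_mod_cast (Fact.out : p.Prime).one_lt.le
        have h2 : (0:ℝ) < (p:ℝ)⁻¹ := by positivity
        linarith
      · rw [norm_pow, PadicInt.norm_p]
        calc ((p:ℝ)⁻¹) ^ (j + 1) ≤ ((p:ℝ)⁻¹) ^ 1 :=
              pow_le_pow_of_le_one hr0 (le_of_lt hr1) (by omega)
          _ = (p:ℝ)⁻¹ := pow_one _
      · rw [norm_pow, PadicInt.norm_p]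
        calc ((p:ℝ)⁻¹) ^ (j + 1) ≤ ((p:ℝ)⁻¹) ^ j :=
              pow_le_pow_of_le_one hr0 (le_of_lt hr1) (by omega)
          _ < ε := hj
  apply PowerSeries.ext
  intro n
  exact sub_eq_zero.mp (hc0 n)
end

section
/- Let E be a field of characteristic different from 2, let G be a group, let χ : G → Eˣ be a group homomorphism, and let c ∈ G satisfy χ(c) = −1. Suppose κ : G → E satisfies the cocycle relation κ(στ) = κ(σ) + χ(σ)^{-1}·κ(τ) for all σ, τ ∈ G, and κ(c) = 0. If κ is a coboundary, i.e. there exists x ∈ E with κ(σ) = (χ(σ)^{-1} − 1)·x for all σ ∈ G, then κ is identically zero. -/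
/-- a 1-cocycle `κ : G → E(χ⁻¹)` vanishing at a complex conjugation `c`
(with `χ c = −1`) which is a coboundary must be identically zero. -/
theorem stmt12 (E : Type*) [Field E] (h2 : (2 : E) ≠ 0) (G : Type*) [Group G]
    (χ : G →* Eˣ) (c : G) (hc : (χ c : E) = -1) (κ : G → E)
    (hcocycle : ∀ σ τ : G, κ (σ * τ) = κ σ + (χ σ : E)⁻¹ * κ τ)
    (hκc : κ c = 0)
    (hcobound : ∃ x : E, ∀ σ : G, κ σ = ((χ σ : E)⁻¹ - 1) * x) :
    ∀ σ : G, κ σ = 0 := by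
  obtain ⟨x, hx⟩ := hcobound
  have h := hx c
  rw [hκc, hc] at h
  have hx0 : x = 0 := by
    have : (-2 : E) * x = 0 := by
      linear_combination -h
    rcases mul_eq_zero.mp this with h' | h'
    · exact absurd (by linear_combination -h') h2
    · exact h'
  intro σ
  rw [hx σ, hx0, mul_zero]
end
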